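/- Let i < j be odd positive integers. In the graph on vertex set {0,1,...,j} with edges {a,b} whenever a + b ∈ {i,j} and a ≠ b, if a vertex lies on a path component then any vertex two edges away from it differs from it by exactly j − i; consequently, the length (number of vertices) of every connected component is either 2⌈(i+1)/(j−i)⌉ or 2⌈(i+1)/(j−i)⌉ + 2. -/

import Mathlib

/-- The condition graph for the pair `(i, j)`: vertices are `0, 1, ..., j` and an edge
joins distinct `a, b` iff `a + b = i` or `a + b = j`. -/
def condGraph (i j : ℕ) : SimpleGraph (Fin (j + 1)) where
  Adj a b := a ≠ b ∧ (a.1 + b.1 = i ∨ a.1 + b.1 = j)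
  symm := by
    constructor
    intro a b h
    exact ⟨h.1.symm, by rw [Nat.add_comm]; exact h.2⟩
  loopless := ⟨fun a h => h.1 rfl⟩

lemma adj_sum_mod {i j d : ℕ} (hdij : i + d = j) {a b : Fin (j+1)}
    (h : (condGraph i j).Adj a b) : (a.1 + b.1) % d = i % d := by
  rcases h.2 with h1 | h1
  · rw [h1]
  · rw [h1, ← hdij, Nat.add_mod_right]

lemma reach_mod {i j d : ℕ} (hdij : i + d = j) {a c : Fin (j+1)}
    (h : (condGraph i j).Reachable a c) :
    c.1 % d = a.1 % d ∨ (c.1 + a.1) % d = i % d := by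
  obtain ⟨w⟩ := h
  induction w with
  | nil => left; rfl
  | @cons a b c hab w ih =>
    have hab' : (a.1 + b.1) % d = i % d := adj_sum_mod hdij hab
    rcases ih with h2 | h2
    · right
      rw [Nat.add_comm] at hab'
      calc (c.1 + a.1) % d = (b.1 + a.1) % d := by rw [Nat.add_mod, h2, ← Nat.add_mod]
        _ = i % d := hab'
    · left
      have hcb : c.1 + b.1 ≡ a.1 + b.1 [MOD d] := by
        have h3 : a.1 + b.1 ≡ i [MOD d] := hab'
        exact (Nat.ModEq.trans h2 h3.symm)
      exact Nat.ModEq.add_right_cancel' _ hcb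

lemma reach_add {i j d : ℕ} (hi : Odd i) (hd2 : Even d) (hd : 0 < d) (hdij : i + d = j)
    (v : Fin (j+1)) (h : v.1 + d ≤ j) :
    (condGraph i j).Reachable v ⟨v.1 + d, by omega⟩ := by
  obtain ⟨k, hk⟩ := hi
  obtain ⟨e, he⟩ := hd2
  have hvi : v.1 ≤ i := by omega
  have hm : i - v.1 < j + 1 := by omega
  have h1 : (condGraph i j).Adj v ⟨i - v.1, hm⟩ := by
    refine ⟨?_, Or.inl (by simp; omega)⟩
    intro hEq
    have := congrArg Fin.val hEq
    simp at this
    omega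
  have h2 : (condGraph i j).Adj ⟨i - v.1, hm⟩ ⟨v.1 + d, by omega⟩ := by
    refine ⟨?_, Or.inr (by simp; omega)⟩
    intro hEq
    have := congrArg Fin.val hEq
    simp at this
    omega
  exact h1.reachable.trans h2.reachable

lemma reach_add_mul {i j d : ℕ} (hi : Odd i) (hd2 : Even d) (hd : 0 < d) (hdij : i + d = j)
    (v : Fin (j+1)) (k : ℕ) (h : v.1 + k*d ≤ j) :
    (condGraph i j).Reachable v ⟨v.1 + k*d, by omega⟩ := by
  induction k with
  | zero =>
    have : (⟨v.1 + 0*d, by omega⟩ : Fin (j+1)) = v := Fin.ext (by simp)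
    rw [this]
  | succ n ih =>
    have hd1 : (n+1)*d = n*d + d := by ring
    have r1 := ih (by omega)
    have r2 := reach_add hi hd2 hd hdij ⟨v.1 + n*d, by omega⟩ (by simp; omega)
    have heq : (⟨(⟨v.1 + n*d, by omega⟩ : Fin (j+1)).1 + d, by simp; omega⟩ : Fin (j+1))
        = ⟨v.1 + (n+1)*d, by omega⟩ := Fin.ext (by simp; omega)
    rw [heq] at r2
    exact r1.trans r2

lemma reach_same_mod {i j d : ℕ} (hi : Odd i) (hd2 : Even d) (hd : 0 < d) (hdij : i + d = j)
    {v w : Fin (j+1)} (hvw : v.1 ≤ w.1) (h : w.1 % d = v.1 % d) :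
    (condGraph i j).Reachable v w := by
  have hdvd : d ∣ w.1 - v.1 := (Nat.modEq_iff_dvd' hvw).mp h.symm
  obtain ⟨k, hk⟩ := hdvd
  rw [mul_comm] at hk
  have hw : w = ⟨v.1 + k*d, by omega⟩ := Fin.ext (by simp; omega)
  rw [hw]
  exact reach_add_mul hi hd2 hd hdij v k (by omega)

lemma reach_iff {i j d : ℕ} (hi : Odd i) (hj : Odd j) (hd2 : Even d) (hd : 0 < d)
    (hdij : i + d = j) (a c : Fin (j+1)) :
    (condGraph i j).Reachable a c ↔
      (c.1 % d = a.1 % d ∨ (c.1 + a.1) % d = i % d) := by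
  constructor
  · exact reach_mod hdij
  · rintro (h | h)
    · rcases le_total a.1 c.1 with hle | hle
      · exact reach_same_mod hi hd2 hd hdij hle h
      · exact (reach_same_mod hi hd2 hd hdij hle h.symm).symm
    · obtain ⟨kj, hkj⟩ := hj
      have hcj : c.1 ≤ j := by omega
      have hadj : (condGraph i j).Adj c ⟨j - c.1, by omega⟩ := by
        refine ⟨?_, Or.inr (by simp; omega)⟩
        intro hEq
        have := congrArg Fin.val hEq
        simp at this
        omega
      have h2 : (j - c.1) % d = a.1 % d := by
        have e1 : (j - c.1) + c.1 ≡ a.1 + c.1 [MOD d] := by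
          have e2 : (j - c.1) + c.1 = j := by omega
          rw [e2]
          show j % d = (a.1 + c.1) % d
          have e3 : j % d = i % d := by rw [← hdij]; exact Nat.add_mod_right i d
          rw [e3, Nat.add_comm]
          exact h.symm
        exact Nat.ModEq.add_right_cancel' _ e1
      have rac : (condGraph i j).Reachable a ⟨j - c.1, by omega⟩ := by
        rcases le_total a.1 (j - c.1) with hle | hle
        · exact reach_same_mod hi hd2 hd hdij hle h2
        · exact (reach_same_mod hi hd2 hd hdij (show (⟨j - c.1, by omega⟩ : Fin (j+1)).1 ≤ a.1 from hle) h2.symm).symm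
      exact rac.trans hadj.symm.reachable

lemma count_res {n d s : ℕ} (hd : 0 < d) (hs : s < d) (hsn : s ≤ n) :
    (Finset.univ.filter (fun v : Fin (n+1) => v.1 % d = s)).card = (n - s)/d + 1 := by
  rw [← Finset.card_range ((n-s)/d + 1)]
  refine Finset.card_bij' (fun v _ => (v.1 - s)/d)
      (fun k hk => (⟨s + k*d, by
        simp only [Finset.mem_range] at hk
        have h1 : k * d ≤ ((n-s)/d) * d := Nat.mul_le_mul_right d (by omega)
        have h2 : ((n-s)/d) * d ≤ n - s := Nat.div_mul_le_self _ _
        omega⟩ : Fin (n+1))) ?_ ?_ ?_ ?_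
  · intro v hv
    simp only [Finset.mem_range]
    have h1 : (v.1 - s)/d ≤ (n - s)/d := Nat.div_le_div_right (by omega)
    omega
  · intro k hk
    simp only [Finset.mem_filter, Finset.mem_univ, true_and]
    show (s + k*d) % d = s
    rw [Nat.add_mul_mod_self_right]
    exact Nat.mod_eq_of_lt hs
  · intro v hv
    simp only [Finset.mem_filter, Finset.mem_univ, true_and] at hv
    apply Fin.ext
    show s + ((v.1 - s)/d) * d = v.1
    have hsv : s ≤ v.1 := by
      have := Nat.mod_le v.1 d
      omega
    have hdvd : d ∣ v.1 - s := (Nat.modEq_iff_dvd' hsv).mp (by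
      show s % d = v.1 % d
      rw [hv, Nat.mod_eq_of_lt hs])
    obtain ⟨m, hm⟩ := hdvd
    have h5 : (v.1 - s)/d = m := by rw [hm, Nat.mul_div_cancel_left m hd]
    rw [h5]
    have : m * d = d * m := mul_comm m d
    omega
  · intro k hk
    show (s + k*d - s)/d = k
    have : s + k*d - s = k*d := by omega
    rw [this, Nat.mul_div_cancel k hd]

/-- For odd positive `i < j`: in the condition graph, any vertex two edges away from a
given vertex differs from it by exactly `j - i`; consequently, the number of vertices of
every connected component is either `2⌈(i+1)/(j-i)⌉` or `2⌈(i+1)/(j-i)⌉ + 2`. -/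
theorem condGraph_component_lengths (i j : ℕ) (hi : Odd i) (hj : Odd j) (h0 : 0 < i)
    (hij : i < j) :
    (∀ a b c : Fin (j + 1), (condGraph i j).Adj a b → (condGraph i j).Adj b c → a ≠ c →
      a.1 + (j - i) = c.1 ∨ c.1 + (j - i) = a.1) ∧
    (∀ K : (condGraph i j).ConnectedComponent,
      Nat.card K.supp = 2 * ((i + 1 + (j - i) - 1) / (j - i)) ∨
      Nat.card K.supp = 2 * ((i + 1 + (j - i) - 1) / (j - i)) + 2) := by
  constructor
  · intro a b c hab hbc hac
    rcases hab with ⟨hne1, h1 | h1⟩ <;> rcases hbc with ⟨hne2, h2 | h2⟩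
    · exact absurd (Fin.ext (show a.1 = c.1 by omega)) hac
    · left; omega
    · right; omega
    · exact absurd (Fin.ext (show a.1 = c.1 by omega)) hac
  · intro K
    obtain ⟨a, rfl⟩ := K.exists_rep
    rw [show (Quot.mk (condGraph i j).Reachable a) = (condGraph i j).connectedComponentMk a
      from rfl]
    set d := j - i with hdd
    have hdij : i + d = j := by omega
    have hd : 0 < d := by omega
    have hd2 : Even d := by
      obtain ⟨ki, hki⟩ := hi
      obtain ⟨kj, hkj⟩ := hj
      exact ⟨kj - ki, by omega⟩
    set s := a.1 % d with hs
    have hs_lt : s < d := Nat.mod_lt _ hd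
    set t := (i + d - s) % d with ht
    have ht_lt : t < d := Nat.mod_lt _ hd
    have hts : (t + s) % d = i % d := by
      have h1 : (t + s) % d = ((i + d - s) + s) % d :=
        Nat.ModEq.add_right s (Nat.mod_modEq (i + d - s) d)
      have h2 : (i + d - s) + s = i + d := by omega
      rw [h1, h2, Nat.add_mod_right]
    have hiff : ∀ c : Fin (j+1), ((c.1 + a.1) % d = i % d ↔ c.1 % d = t) := by
      intro c
      have has : a.1 ≡ s [MOD d] := (Nat.mod_modEq a.1 d).symm.trans (by rw [← hs])
      constructor
      · intro h
        have h1 : c.1 + a.1 ≡ t + a.1 [MOD d] := by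
          have h2 : t + a.1 ≡ t + s [MOD d] := Nat.ModEq.add_left t has
          exact (Nat.ModEq.trans h (hts.symm)).trans h2.symm
        have h3 : c.1 ≡ t [MOD d] := Nat.ModEq.add_right_cancel' _ h1
        have : c.1 % d = t % d := h3
        rwa [Nat.mod_eq_of_lt ht_lt] at this
      · intro h
        have h3 : c.1 ≡ t [MOD d] := by
          show c.1 % d = t % d
          rw [h, Nat.mod_eq_of_lt ht_lt]
        exact (Nat.ModEq.add h3 has).trans hts
    have hst : s ≠ t := by
      intro hEq
      obtain ⟨ki, hki⟩ := hi
      obtain ⟨e, he⟩ := hd2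
      have h1 : (s + s) % d = i % d := by
        have h2 : s + s = t + s := by rw [hEq]
        rw [h2]; exact hts
      have h2 := Nat.div_add_mod (s+s) d
      have h3 := Nat.div_add_mod i d
      have e1 : d * ((s+s)/d) = 2*(e*((s+s)/d)) := by rw [he]; ring
      have e2 : d * (i/d) = 2*(e*(i/d)) := by rw [he]; ring
      omega
    have main_iff : ∀ c : Fin (j+1),
        (condGraph i j).Reachable c a ↔ (c.1 % d = s ∨ c.1 % d = t) := by
      intro c
      constructor
      · intro h
        rcases (reach_iff hi hj hd2 hd hdij a c).mp h.symm with h1 | h1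
        · left; rw [hs]; exact h1
        · right; exact (hiff c).mp h1
      · intro h
        refine ((reach_iff hi hj hd2 hd hdij a c).mpr ?_).symm
        rcases h with h1 | h1
        · left; rw [← hs]; exact h1
        · right; exact (hiff c).mpr h1
    set F := Finset.univ.filter (fun c : Fin (j+1) => c.1 % d = s ∨ c.1 % d = t) with hF
    have hsupp : ((condGraph i j).connectedComponentMk a).supp = ↑F := by
      ext c
      simp only [SimpleGraph.ConnectedComponent.mem_supp_iff,
        SimpleGraph.ConnectedComponent.eq, hF, Finset.coe_filter, Set.mem_setOf_eq,
        Finset.mem_univ, true_and]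
      exact main_iff c
    rw [hsupp, Nat.card_coe_set_eq, Set.ncard_coe_finset]
    have hdisj : Disjoint (Finset.univ.filter (fun c : Fin (j+1) => c.1 % d = s))
        (Finset.univ.filter (fun c : Fin (j+1) => c.1 % d = t)) := by
      rw [Finset.disjoint_left]
      intro v hv1 hv2
      simp only [Finset.mem_filter, Finset.mem_univ, true_and] at hv1 hv2
      exact hst (hv1 ▸ hv2)
    have hcard : F.card = ((j - s)/d + 1) + ((j - t)/d + 1) := by
      rw [hF, Finset.filter_or, Finset.card_union_of_disjoint hdisj,
        count_res hd hs_lt (by omega), count_res hd ht_lt (by omega)]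
    have hqm := Nat.div_add_mod i d
    have hm_lt : i % d < d := Nat.mod_lt _ hd
    have hRHS : (i + 1 + d - 1) / d = i/d + 1 := by
      have e1 : i + 1 + d - 1 = d * (i/d + 1) + i % d := by
        have : d * (i/d + 1) = d * (i/d) + d := by ring
        omega
      rw [e1, Nat.mul_add_div hd, Nat.div_eq_of_lt hm_lt]
    have hstm : (s + t) % d = i % d := by rw [Nat.add_comm]; exact hts
    rcases Nat.lt_or_ge (s + t) d with hcase | hcase
    · -- s + t = i % d
      have hsum : s + t = i % d := by rwa [Nat.mod_eq_of_lt hcase] at hstm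
      have hdiv1 : (j - s)/d = i/d + 1 := by
        have e1 : j - s = d * (i/d + 1) + (i % d - s) := by
          have : d * (i/d + 1) = d * (i/d) + d := by ring
          omega
        rw [e1, Nat.mul_add_div hd, Nat.div_eq_of_lt (show i % d - s < d by omega)]
      have hdiv2 : (j - t)/d = i/d + 1 := by
        have e1 : j - t = d * (i/d + 1) + (i % d - t) := by
          have : d * (i/d + 1) = d * (i/d) + d := by ring
          omega
        rw [e1, Nat.mul_add_div hd, Nat.div_eq_of_lt (show i % d - t < d by omega)]
      right; omega
    · -- s + t = i % d + d
      have hsub : (s + t) % d = s + t - d := by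
        rw [Nat.mod_eq_sub_mod hcase]
        exact Nat.mod_eq_of_lt (by omega)
      have hsum : s + t = i % d + d := by omega
      have hdiv1 : (j - s)/d = i/d := by
        have e1 : j - s = d * (i/d) + (i % d + d - s) := by omega
        rw [e1, Nat.mul_add_div hd, Nat.div_eq_of_lt (show i % d + d - s < d by omega)]
        omega
      have hdiv2 : (j - t)/d = i/d := by
        have e1 : j - t = d * (i/d) + (i % d + d - t) := by omega
        rw [e1, Nat.mul_add_div hd, Nat.div_eq_of_lt (show i % d + d - t < d by omega)]
        omega
      left; omega
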